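/- Let A be a prefix-free, left-total set of finite binary strings, and let b be a nonempty finite binary string such that b is total with respect to A and b⁻ (b with its last bit removed) is not total with respect to A. Then b⁻ has both a total extension and a non-total extension with respect to A; moreover, for every infinite binary sequence α with the property that each finite prefix of α has both a total extension and a non-total extension with respect to A, b⁻ is a prefix of α. -/

import Mathlib

/-- The first `n` bits of an infinite binary sequence, as a finite string. -/
def firstN (α : ℕ → Bool) (n : ℕ) : List Bool := List.ofFn fun i : Fin n => α i

/-- A set of finite binary strings is prefix-free if no element is a proper prefix
of another element. -/
def PrefixFree (A : Set (List Bool)) : Prop :=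
  ∀ x ∈ A, ∀ y ∈ A, x <+: y → x = y

/-- `x` is total with respect to `A` if every infinite binary sequence extending `x`
has some finite prefix belonging to `A`. -/
def TotalFor (A : Set (List Bool)) (x : List Bool) : Prop :=
  ∀ α : ℕ → Bool, (∀ i : Fin x.length, α i = x.get i) → ∃ n : ℕ, firstN α n ∈ A

/-- `x` is to the left of `y`: some `z ++ [false]` is a prefix of `x` while
`z ++ [true]` is a prefix of `y`. -/
def LeftOf (x y : List Bool) : Prop :=
  ∃ z : List Bool, z ++ [false] <+: x ∧ z ++ [true] <+: y

/-- `A` is left-total if every finite string to the left of some element of `A`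
is total with respect to `A`. -/
def LeftTotal (A : Set (List Bool)) : Prop :=
  ∀ x y : List Bool, y ∈ A → LeftOf x y → TotalFor A x

lemma firstN_length (α : ℕ → Bool) (n : ℕ) : (firstN α n).length = n := by
  simp [firstN]

lemma agree_firstN_eq_take {α : ℕ → Bool} {x : List Bool}
    (h : ∀ i : Fin x.length, α i = x.get i) {n : ℕ} (hn : n ≤ x.length) :
    firstN α n = x.take n := by
  apply List.ext_getElem
  · simp [firstN, hn]
  · intro i h1 h2
    have hi : i < x.length := lt_of_lt_of_le (by simpa [firstN] using h1) hn
    have := h ⟨i, hi⟩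
    simp [firstN, List.getElem_take]
    simpa [List.get_eq_getElem] using this

lemma firstN_agree (α : ℕ → Bool) (n : ℕ) :
    ∀ i : Fin (firstN α n).length, α i = (firstN α n).get i := by
  intro i
  rw [List.get_eq_getElem]
  simp [firstN]

lemma firstN_getElem (α : ℕ → Bool) {n i : ℕ} (h : i < (firstN α n).length) :
    (firstN α n)[i] = α i := by
  simp [firstN]

lemma firstN_prefix (α : ℕ → Bool) {m n : ℕ} (h : m ≤ n) :
    firstN α m <+: firstN α n := by
  have := agree_firstN_eq_take (firstN_agree α n) (by simpa [firstN_length] using h)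
  rw [this]
  exact List.take_prefix _ _

lemma total_of_prefix {A : Set (List Bool)} {x e : List Bool}
    (hx : TotalFor A x) (hpre : x <+: e) : TotalFor A e := by
  intro β hβ
  apply hx β
  intro i
  obtain ⟨t, rfl⟩ := hpre
  have hi : (i : ℕ) < (x ++ t).length := by
    simp only [List.length_append]
    exact lt_of_lt_of_le i.isLt (Nat.le_add_right _ _)
  have := hβ ⟨i, hi⟩
  simpa [List.get_eq_getElem, List.getElem_append_left i.isLt] using this

lemma prefix_take_eq {x y : List Bool} (h : x <+: y) : y.take x.length = x := by
  obtain ⟨t, rfl⟩ := h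
  simp

lemma left_of_total {A : Set (List Bool)} (hlt : LeftTotal A) {x y : List Bool}
    (hy : TotalFor A y) (hxy : LeftOf x y) : TotalFor A x := by
  obtain ⟨z, hzx, hzy⟩ := hxy
  set β : ℕ → Bool := fun i => y.getD i false with hβdef
  have hβ : ∀ i : Fin y.length, β i = y.get i := by
    intro i
    simp [hβdef, List.getD_eq_getElem?_getD, List.getElem?_eq_getElem i.isLt,
      List.get_eq_getElem]
  obtain ⟨n, hn⟩ := hy β hβ
  have hzy' : z.length + 1 ≤ y.length := by
    have := hzy.length_le
    simpa using this
  have hzx' : z.length + 1 ≤ x.length := by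
    have := hzx.length_le
    simpa using this
  by_cases hcase : n ≤ z.length
  · -- the element of A found is a prefix of z, hence of x: x is trivially total
    have h1 : firstN β n = y.take n := agree_firstN_eq_take hβ (le_trans hcase (by omega))
    have hyt : y.take (z.length + 1) = z ++ [true] := by
      have := prefix_take_eq hzy; simpa using this
    have hxt : x.take (z.length + 1) = z ++ [false] := by
      have := prefix_take_eq hzx; simpa using this
    have hyx : y.take n = x.take n := by
      calc y.take n = (y.take (z.length+1)).take n := by
            rw [List.take_take, min_eq_left (by omega)]
        _ = (z ++ [true]).take n := by rw [hyt]
        _ = z.take n := List.take_append_of_le_length hcase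
        _ = (z ++ [false]).take n := (List.take_append_of_le_length hcase).symm
        _ = (x.take (z.length+1)).take n := by rw [hxt]
        _ = x.take n := by rw [List.take_take, min_eq_left (by omega)]
    intro γ hγ
    refine ⟨n, ?_⟩
    have : firstN γ n = x.take n := agree_firstN_eq_take hγ (by omega)
    rw [this, ← hyx, ← h1]
    exact hn
  · -- z ++ [true] is a prefix of the element of A found: x is left of it
    push_neg at hcase
    have h1 : firstN β (z.length + 1) = y.take (z.length + 1) :=
      agree_firstN_eq_take hβ (by omega)
    have h2 : y.take (z.length + 1) = z ++ [true] := by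
      have := prefix_take_eq hzy; simpa using this
    have h3 : z ++ [true] <+: firstN β n := by
      rw [← h2, ← h1]
      exact firstN_prefix β (by omega)
    exact hlt x (firstN β n) hn ⟨z, hzx, h3⟩

lemma firstN_succ (α : ℕ → Bool) (n : ℕ) :
    firstN α (n + 1) = firstN α n ++ [α n] := by
  have h1 : firstN α n = (firstN α (n+1)).take n :=
    agree_firstN_eq_take (firstN_agree α (n+1)) (by simp [firstN_length])
  have h2 := List.take_succ (l := firstN α (n+1)) (i := n)
  have hn : n < (firstN α (n+1)).length := by simp [firstN_length]
  rw [List.take_of_length_le (by simp [firstN_length])] at h2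
  rw [h2, ← h1, List.getElem?_eq_getElem hn, firstN_getElem α hn]
  simp

theorem stmt_11
    (A : Set (List Bool)) (hpf : PrefixFree A) (hlt : LeftTotal A)
    (b : List Bool) (hb : b ≠ [])
    (hbtot : TotalFor A b) (hbpre : ¬TotalFor A b.dropLast) :
    ((∃ e : List Bool, b.dropLast <+: e ∧ TotalFor A e) ∧
      (∃ e : List Bool, b.dropLast <+: e ∧ ¬TotalFor A e)) ∧
    ∀ α : ℕ → Bool,
      (∀ n : ℕ, (∃ e : List Bool, firstN α n <+: e ∧ TotalFor A e) ∧
        (∃ e : List Bool, firstN α n <+: e ∧ ¬TotalFor A e)) →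
      ∀ i : Fin b.dropLast.length, α i = b.dropLast.get i := by
  have hdp : b.dropLast <+: b := List.dropLast_prefix b
  constructor
  · exact ⟨⟨b, hdp, hbtot⟩, ⟨b.dropLast, List.prefix_rfl, hbpre⟩⟩
  · intro α hα
    have key : ∀ n, n ≤ b.dropLast.length → firstN α n = b.dropLast.take n := by
      intro n
      induction n with
      | zero => intro _; simp [firstN]
      | succ i ih =>
        intro h1
        have hi : i < b.dropLast.length := by omega
        have hp := ih (le_of_lt hi)
        set p := b.dropLast.take i with hpdef
        have htake1 : b.dropLast.take (i+1) = p ++ [b.dropLast.get ⟨i, hi⟩] := by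
          rw [hpdef, List.take_succ, List.getElem?_eq_getElem hi]
          simp [List.get_eq_getElem]
        have hd : α i = b.dropLast.get ⟨i, hi⟩ := by
          by_contra hne
          rcases hcase : b.dropLast.get ⟨i, hi⟩ with _ | _
          · -- b⁻ continues with false, α deviates with true
            have hαi : α i = true := by
              cases h : α i with
              | false => rw [h, hcase] at hne; exact absurd rfl hne
              | true => rfl
            -- total extension e of firstN α (i+1) = p ++ [true]
            obtain ⟨e, hpe, het⟩ := (hα (i+1)).1
            rw [firstN_succ, hp, hαi] at hpe
            -- b⁻ is left of e, so b⁻ is total: contradiction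
            have hpfb : p ++ [false] <+: b.dropLast := by
              rw [← hcase, ← htake1]; exact List.take_prefix _ _
            exact hbpre (left_of_total hlt het ⟨p, hpfb, hpe⟩)
          · -- b⁻ continues with true, α deviates with false
            have hαi : α i = false := by
              cases h : α i with
              | false => rfl
              | true => rw [h, hcase] at hne; exact absurd rfl hne
            -- p ++ [false] is left of b, which is total, so p ++ [false] is total
            have hptb : p ++ [true] <+: b := by
              refine List.IsPrefix.trans ?_ hdp
              rw [← hcase, ← htake1]; exact List.take_prefix _ _
            have htotpf : TotalFor A (p ++ [false]) :=
              left_of_total hlt hbtot ⟨p, List.prefix_rfl, hptb⟩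
            -- but firstN α (i+1) = p ++ [false] has a non-total extension
            obtain ⟨e, hpe, hent⟩ := (hα (i+1)).2
            rw [firstN_succ, hp, hαi] at hpe
            exact hent (total_of_prefix htotpf hpe)
        rw [firstN_succ, hp, hd, ← htake1]
    intro i
    have h1 := key (i+1) (by omega)
    have hlen : (i : ℕ) < (firstN α (i+1)).length := by simp [firstN_length]
    have h2 : (firstN α (i+1))[(i : ℕ)] = α i := firstN_getElem α hlen
    simp only [h1, List.getElem_take] at h2
    rw [List.get_eq_getElem, ← h2]
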